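/- Let x, y, z be three points on the unit sphere S² ⊂ ℝ³ such that d(x,y) + d(y,z) + d(z,x) = 2π, where d denotes the intrinsic (angular) distance. Then x, y, z lie on a common great circle, i.e., there is a 2-dimensional linear subspace of ℝ³ containing all three points. -/

import Mathlib

open Module

private lemma trigId (a b c : ℝ) (h : a + b + c = 2 * Real.pi) :
    Real.sin b ^ 2 + Real.sin c ^ 2 + Real.sin a ^ 2
      + 2 * (Real.sin b * Real.sin c * Real.cos a)
      + 2 * (Real.sin c * Real.sin a * Real.cos b)
      + 2 * (Real.sin a * Real.sin b * Real.cos c) = 0 := by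
  have hc : c = 2 * Real.pi - (a + b) := by linarith
  subst hc
  rw [Real.sin_two_pi_sub, Real.cos_two_pi_sub, Real.sin_add, Real.cos_add]
  nlinarith [Real.sin_sq_add_cos_sq a, Real.sin_sq_add_cos_sq b]

private lemma grow {V : Type*} [AddCommGroup V] [Module ℝ V] [FiniteDimensional ℝ V] :
    ∀ (k : ℕ) (K : Submodule ℝ V) (n : ℕ), finrank ℝ K ≤ n → n ≤ finrank ℝ V →
      n - finrank ℝ K = k → ∃ S : Submodule ℝ V, finrank ℝ S = n ∧ K ≤ S := by
  intro k
  induction k with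
  | zero =>
    intro K n h1 _ h0
    exact ⟨K, le_antisymm h1 (by omega), le_rfl⟩
  | succ k ih =>
    intro K n h1 h2 h0
    have hlt : finrank ℝ K < finrank ℝ V := by omega
    obtain ⟨m, hm⟩ := Submodule.exists_of_finrank_lt K hlt
    have hm0 : m ≠ 0 := fun h => hm 1 one_ne_zero (by simp [h])
    have hmK : m ∉ K := fun h => hm 1 one_ne_zero (by simpa using h)
    have hdisj : Disjoint K (ℝ ∙ m) := (Submodule.disjoint_span_singleton' hm0).mpr hmK
    have hfr : finrank ℝ ↥(K ⊔ (ℝ ∙ m)) = finrank ℝ K + 1 := by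
      have h3 := Submodule.finrank_sup_add_finrank_inf_eq K (ℝ ∙ m)
      rw [hdisj.eq_bot, finrank_bot, finrank_span_singleton hm0] at h3
      omega
    obtain ⟨S, hS1, hS2⟩ := ih (K ⊔ (ℝ ∙ m)) n (by omega) h2 (by omega)
    exact ⟨S, hS1, le_trans le_sup_left hS2⟩

/-- If three points of the unit sphere `S² ⊂ ℝ³` span a triangle of intrinsic
perimeter `2π`, then they lie on a common great circle. -/
theorem stmt2 (x y z : EuclideanSpace ℝ (Fin 3))
    (hx : ‖x‖ = 1) (hy : ‖y‖ = 1) (hz : ‖z‖ = 1)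
    (h : Real.arccos (inner ℝ x y : ℝ) + Real.arccos (inner ℝ y z : ℝ) +
      Real.arccos (inner ℝ z x : ℝ) = 2 * Real.pi) :
    ∃ S : Submodule ℝ (EuclideanSpace ℝ (Fin 3)),
      finrank ℝ S = 2 ∧ x ∈ S ∧ y ∈ S ∧ z ∈ S := by
  set p : ℝ := inner ℝ x y with hp
  set q : ℝ := inner ℝ y z with hq
  set r : ℝ := inner ℝ z x with hr
  have hp1 : |p| ≤ 1 := by
    have := abs_real_inner_le_norm x y; rwa [hx, hy, one_mul] at this
  have hq1 : |q| ≤ 1 := by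
    have := abs_real_inner_le_norm y z; rwa [hy, hz, one_mul] at this
  have hr1 : |r| ≤ 1 := by
    have := abs_real_inner_le_norm z x; rwa [hz, hx, one_mul] at this
  rw [abs_le] at hp1 hq1 hr1
  set a : ℝ := Real.arccos p
  set b : ℝ := Real.arccos q
  set c : ℝ := Real.arccos r
  have hca : Real.cos a = p := Real.cos_arccos hp1.1 hp1.2
  have hcb : Real.cos b = q := Real.cos_arccos hq1.1 hq1.2
  have hcc : Real.cos c = r := Real.cos_arccos hr1.1 hr1.2
  -- the dependence relation
  have hdep : ∃ α β γ : ℝ, α • x + β • y + γ • z = 0 ∧ ¬(α = 0 ∧ β = 0 ∧ γ = 0) := by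
    by_cases hsa : Real.sin a = 0
    · -- degenerate: p = ±1
      have hpsq : p ^ 2 = 1 := by
        have := Real.sin_arccos p
        rw [hsa] at this
        have h0 : 1 - p ^ 2 ≤ 0 := by
          by_contra hpos
          push_neg at hpos
          exact absurd this.symm (ne_of_gt (Real.sqrt_pos.mpr hpos))
        nlinarith
      have : (p - 1) * (p + 1) = 0 := by nlinarith
      rcases mul_eq_zero.mp this with h1 | h1
      · -- p = 1, x = y
        have hxy : x = y := (inner_eq_one_iff_of_norm_eq_one (𝕜 := ℝ) hx hy).mp (by rw [← hp]; linarith)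
        exact ⟨1, -1, 0, by rw [hxy]; module, by simp⟩
      · -- p = -1, x = -y
        have hxy : x = -y := by
          have hny : ‖(-y : EuclideanSpace ℝ (Fin 3))‖ = 1 := by rwa [norm_neg]
          refine (inner_eq_one_iff_of_norm_eq_one (𝕜 := ℝ) hx hny).mp ?_
          have hn : (inner ℝ x (-y) : ℝ) = -(inner ℝ x y) := by
            exact inner_neg_right (𝕜 := ℝ) x y
          rw [hn]; linarith
        exact ⟨1, 1, 0, by rw [hxy]; module, by simp⟩
    · -- nondegenerate: use w = sin b • x + sin c • y + sin a • z = 0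
      set sa := Real.sin a
      set sb := Real.sin b
      set sc := Real.sin c
      refine ⟨sb, sc, sa, ?_, fun hh => hsa hh.2.2⟩
      set w : EuclideanSpace ℝ (Fin 3) := sb • x + sc • y + sa • z with hw
      have hxx : (inner ℝ x x : ℝ) = 1 := by
        rw [real_inner_self_eq_norm_mul_norm, hx]; ring
      have hyy : (inner ℝ y y : ℝ) = 1 := by
        rw [real_inner_self_eq_norm_mul_norm, hy]; ring
      have hzz : (inner ℝ z z : ℝ) = 1 := by
        rw [real_inner_self_eq_norm_mul_norm, hz]; ring
      have hww : (inner ℝ w w : ℝ) = 0 := by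
        have hexp : (inner ℝ w w : ℝ) =
            sb ^ 2 + sc ^ 2 + sa ^ 2 + 2 * (sb * sc * p)
              + 2 * (sc * sa * q) + 2 * (sa * sb * r) := by
          have e1 : (inner ℝ y x : ℝ) = p := by rw [real_inner_comm]
          have e2 : (inner ℝ x z : ℝ) = r := by rw [real_inner_comm]
          have e3 : (inner ℝ z y : ℝ) = q := by rw [real_inner_comm]
          simp only [hw, inner_add_left, inner_add_right, real_inner_smul_left,
            real_inner_smul_right, hxx, hyy, hzz, e1, e2, e3, ← hp, ← hq, ← hr]
          ring
        rw [hexp, ← hca, ← hcb, ← hcc]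
        exact trigId a b c h
      exact inner_self_eq_zero.mp hww
  -- not linearly independent
  obtain ⟨α, β, γ, hrel, hnz⟩ := hdep
  have hnli : ¬ LinearIndependent ℝ ![x, y, z] := by
    intro li
    have hsum : (∑ i, ![α, β, γ] i • ![x, y, z] i) = α • x + β • y + γ • z := by
      simp [Fin.sum_univ_three, add_assoc]
    have := Fintype.linearIndependent_iff.mp li ![α, β, γ] (by rw [hsum]; exact hrel)
    exact hnz ⟨this 0, this 1, this 2⟩
  have hV : finrank ℝ (EuclideanSpace ℝ (Fin 3)) = 3 := finrank_euclideanSpace_fin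
  set K : Submodule ℝ (EuclideanSpace ℝ (Fin 3)) :=
    Submodule.span ℝ (Set.range ![x, y, z]) with hK
  have hKle : finrank ℝ K ≤ 2 := by
    by_contra hgt
    push_neg at hgt
    have hle3 : finrank ℝ K ≤ 3 := (Submodule.finrank_le K).trans (le_of_eq hV)
    have hK3 : finrank ℝ K = 3 := by omega
    have hKtop : K = ⊤ := Submodule.eq_top_of_finrank_eq (by rw [hK3, hV])
    exact hnli (linearIndependent_of_top_le_span_of_card_eq_finrank
      (le_of_eq hKtop.symm) (by simp [hV]))
  obtain ⟨S, hS1, hS2⟩ := grow (2 - finrank ℝ K) K 2 hKle (by omega) rfl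
  refine ⟨S, hS1, ?_, ?_, ?_⟩
  · exact hS2 (Submodule.subset_span ⟨0, rfl⟩)
  · exact hS2 (Submodule.subset_span ⟨1, rfl⟩)
  · exact hS2 (Submodule.subset_span ⟨2, rfl⟩)
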